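/- Let p be an odd prime, u a primitive root mod p, and for 1 ≤ d ≤ p-2 set I(d) = { i : 1 ≤ i ≤ p-1, u_{ν-i} + (d·u_{ν-i} mod p) > p } where ν = (p-1)/2 and u_k denotes the residue of u^k in {1,...,p-1}. Then for each i with 1 ≤ i ≤ p-1, exactly one of i and i' ≡ i + (p-1)/2 (mod p-1, normalized to {1,...,p-1}) belongs to I(d); consequently |I(d)| = (p-1)/2. -/

import Mathlib

theorem stmt10 (p : ℕ) (hp : p.Prime) (hodd : Odd p) (u : ℕ)
    (hu : IsPrimitiveRoot (u : ZMod p) (p - 1)) (d : ℕ) (hd1 : 1 ≤ d) (hd2 : d ≤ p - 2)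
    (r : ℕ → ℕ) (hr : ∀ i, r i = u ^ ((p - 1) / 2 + (p - 1) - i) % p)
    (I : Finset ℕ)
    (hI : I = (Finset.Icc 1 (p - 1)).filter (fun i => p < r i + d * r i % p)) :
    (∀ i ∈ Finset.Icc 1 (p - 1),
        Xor' (i ∈ I)
          ((if i + (p - 1) / 2 ≤ p - 1 then i + (p - 1) / 2
            else i + (p - 1) / 2 - (p - 1)) ∈ I)) ∧
    I.card = (p - 1) / 2 := by
  haveI : Fact p.Prime := ⟨hp⟩
  obtain ⟨k, hk⟩ := hodd
  have hp2 : 2 ≤ p := hp.two_le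
  have hp3 : 3 ≤ p := by omega
  set ν : ℕ := (p - 1) / 2 with hνdef
  have hν : p = 2 * ν + 1 := by omega
  have hν1 : 1 ≤ ν := by omega
  -- u is not divisible by p
  have hu0 : (u : ZMod p) ≠ 0 := by
    intro h
    have h1 := hu.pow_eq_one
    rw [h, zero_pow (by omega : p - 1 ≠ 0)] at h1
    exact zero_ne_one h1
  have hpu : ¬ p ∣ u := by
    exact fun h => hu0 ((ZMod.natCast_eq_zero_iff u p).mpr h)
  -- u^ν = -1
  have hneg : (u : ZMod p) ^ ν = -1 := by
    have hsq : ((u : ZMod p) ^ ν) * ((u : ZMod p) ^ ν) = 1 := by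
      rw [← pow_add]
      have hh : ν + ν = p - 1 := by omega
      rw [hh, hu.pow_eq_one]
    rcases mul_self_eq_one_iff.mp hsq with h | h
    · exact absurd h (hu.pow_ne_one_of_pos_of_lt (by omega) (by omega))
    · exact h
  -- basic facts about r
  have rcast : ∀ i, ((r i : ℕ) : ZMod p) = (u : ZMod p) ^ (ν + (p - 1) - i) := by
    intro i
    rw [hr i, ZMod.natCast_mod, Nat.cast_pow]
  have rne : ∀ i, r i ≠ 0 := by
    intro i h
    rw [hr i] at h
    exact hpu (hp.dvd_of_dvd_pow (Nat.dvd_of_mod_eq_zero h))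
  have rlt : ∀ i, r i < p := by
    intro i
    rw [hr i]
    exact Nat.mod_lt _ (by omega)
  -- d * r i is not divisible by p
  have hpd : ¬ p ∣ d := fun h => absurd (Nat.le_of_dvd (by omega) h) (by omega)
  have dne : ∀ i, d * r i % p ≠ 0 := by
    intro i h
    rcases (Nat.Prime.dvd_mul hp).mp (Nat.dvd_of_mod_eq_zero h) with h' | h'
    · exact hpd h'
    · have := rlt i
      exact absurd (Nat.le_of_dvd (Nat.pos_of_ne_zero (rne i)) h') (by omega)
  have dlt : ∀ i, d * r i % p < p := fun i => Nat.mod_lt _ (by omega)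
  have dcast : ∀ i, ((d * r i % p : ℕ) : ZMod p) = (d : ZMod p) * ((r i : ℕ) : ZMod p) := by
    intro i
    rw [ZMod.natCast_mod, Nat.cast_mul]
  -- the pairing map
  set σ : ℕ → ℕ := fun i => if i + ν ≤ p - 1 then i + ν else i + ν - (p - 1) with hσ
  -- cast of r (σ i) is the negative of cast of r i
  have rσcast : ∀ i ∈ Finset.Icc 1 (p - 1),
      ((r (σ i) : ℕ) : ZMod p) = - ((r i : ℕ) : ZMod p) := by
    intro i hi
    rw [Finset.mem_Icc] at hi
    rw [rcast, rcast]
    by_cases hc : i + ν ≤ p - 1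
    · have hσi : σ i = i + ν := by simp [hσ, hc]
      rw [hσi]
      have he : ν + (p - 1) - i = (ν + (p - 1) - (i + ν)) + ν := by omega
      rw [he, pow_add, hneg, mul_neg_one, neg_neg]
    · have hσi : σ i = i + ν - (p - 1) := by simp [hσ, hc]
      rw [hσi]
      have he : ν + (p - 1) - (i + ν - (p - 1)) = (ν + (p - 1) - i) + ν := by omega
      rw [he, pow_add, hneg, mul_neg_one]
  -- σ maps Icc into Icc
  have hσmem : ∀ i ∈ Finset.Icc 1 (p - 1), σ i ∈ Finset.Icc 1 (p - 1) := by
    intro i hi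
    rw [Finset.mem_Icc] at hi ⊢
    simp only [hσ]
    split_ifs <;> omega
  -- σ is an involution on Icc
  have hσinv : ∀ i ∈ Finset.Icc 1 (p - 1), σ (σ i) = i := by
    intro i hi
    rw [Finset.mem_Icc] at hi
    simp only [hσ]
    split_ifs <;> omega
  -- helper: sum of complementary residues equals p
  have hsump : ∀ a b : ℕ, a ≠ 0 → a < p → b ≠ 0 → b < p →
      ((a : ZMod p) + (b : ZMod p) = 0) → a + b = p := by
    intro a b ha halt hb hblt h
    have : ((a + b : ℕ) : ZMod p) = 0 := by push_cast; exact h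
    rw [ZMod.natCast_eq_zero_iff] at this
    obtain ⟨c, hc⟩ := this
    have hc2 : c < 2 := by
      by_contra hcon
      push_neg at hcon
      nlinarith
    interval_cases c <;> omega
  -- r i + r (σ i) = p
  have hrsum : ∀ i ∈ Finset.Icc 1 (p - 1), r i + r (σ i) = p := by
    intro i hi
    apply hsump _ _ (rne i) (rlt i) (rne (σ i)) (rlt (σ i))
    rw [rσcast i hi]
    ring
  -- d*r i % p + d*r (σ i) % p = p
  have hdsum : ∀ i ∈ Finset.Icc 1 (p - 1), d * r i % p + d * r (σ i) % p = p := by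
    intro i hi
    apply hsump _ _ (dne i) (dlt i) (dne (σ i)) (dlt (σ i))
    rw [dcast, dcast, rσcast i hi]
    ring
  -- r i + d*r i % p ≠ p
  have hnep : ∀ i, r i + d * r i % p ≠ p := by
    intro i h
    have h0 : ((r i : ℕ) : ZMod p) + ((d * r i % p : ℕ) : ZMod p) = 0 := by
      have : ((r i + d * r i % p : ℕ) : ZMod p) = ((p : ℕ) : ZMod p) := by rw [h]
      rw [ZMod.natCast_self] at this
      push_cast at this
      exact this
    rw [dcast] at h0
    have h1 : (1 + (d : ZMod p)) * ((r i : ℕ) : ZMod p) = 0 := by ring_nf; ring_nf at h0; linear_combination h0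
    rcases mul_eq_zero.mp h1 with h2 | h2
    · have : ((1 + d : ℕ) : ZMod p) = 0 := by push_cast; exact h2
      rw [ZMod.natCast_eq_zero_iff] at this
      exact absurd (Nat.le_of_dvd (by omega) this) (by omega)
    · have : p ∣ r i := (ZMod.natCast_eq_zero_iff _ _).mp h2
      have h3 := rlt i
      exact absurd (Nat.le_of_dvd (Nat.pos_of_ne_zero (rne i)) this) (by omega)
  -- membership criterion
  have hmem : ∀ i, i ∈ I ↔ (i ∈ Finset.Icc 1 (p - 1) ∧ p < r i + d * r i % p) := by
    intro i
    rw [hI, Finset.mem_filter]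
  -- the xor statement
  have hxor : ∀ i ∈ Finset.Icc 1 (p - 1), Xor' (i ∈ I) (σ i ∈ I) := by
    intro i hi
    have h1 := hrsum i hi
    have h2 := hdsum i hi
    have h3 := hnep i
    have h4 := hσmem i hi
    rcases lt_or_ge p (r i + d * r i % p) with h | h
    · exact Or.inl ⟨(hmem i).mpr ⟨hi, h⟩, fun hb => by
        have := ((hmem _).mp hb).2; omega⟩
    · exact Or.inr ⟨(hmem _).mpr ⟨h4, by omega⟩, fun ha => by
        have := ((hmem _).mp ha).2; omega⟩
  have hIsub : I ⊆ Finset.Icc 1 (p - 1) := by rw [hI]; exact Finset.filter_subset _ _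
  constructor
  · intro i hi
    exact hxor i hi
  · have hcard : I.card = ((Finset.Icc 1 (p - 1)) \ I).card := by
      apply Finset.card_nbij' σ σ
      · intro a ha
        have haT := hIsub ha
        rw [Finset.mem_coe, Finset.mem_sdiff]
        refine ⟨hσmem a haT, ?_⟩
        rcases hxor a haT with ⟨_, hb⟩ | ⟨_, hb⟩
        · exact hb
        · exact absurd ha hb
      · intro a ha
        rw [Finset.mem_coe, Finset.mem_sdiff] at ha
        rcases hxor a ha.1 with ⟨h1, _⟩ | ⟨h1, _⟩
        · exact absurd h1 ha.2
        · exact h1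
      · intro a ha
        exact hσinv a (hIsub ha)
      · intro a ha
        rw [Finset.mem_coe, Finset.mem_sdiff] at ha
        exact hσinv a ha.1
    have h1 : ((Finset.Icc 1 (p - 1)) \ I).card = (p - 1) - I.card := by
      rw [Finset.card_sdiff_of_subset hIsub, Nat.card_Icc]; omega
    have h2 : I.card ≤ p - 1 := by
      have := Finset.card_le_card hIsub
      rwa [Nat.card_Icc] at this
    omega
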